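/- Let (M,χ) be a module of the system with m = |M|, and suppose the relative quality functions satisfy q_j(A) = 1/(n·C(n−1,|A|)) for every j ∈ M and A ⊆ C∖{j}. Then for every k ∈ {1,…,m}, p_M^{(k)} = p_k^M · ∫_0^1 r_{k,m}(t) · (∑_{B⊆C∖M} t^{|B|}·(1−t)^{n−m−|B|}·Δ_[M]ψ(B)) dt, where r_{k,m}(t) = m·C(m−1, m−k)·t^{m−k}·(1−t)^{k−1} is the probability density of the beta distribution on [0,1] with parameters α = m−k+1 and β = k. -/

import Mathlib

open MeasureTheory Finset

/-- Lifetime of the (sub)system on component set `D` with structure function `χ`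
(the maximum over the sets `A ⊆ D` with `χ A = 1` of `min_{i ∈ A} T i`). -/
noncomputable def sysLifeOn {Ω : Type*} {n : ℕ} (T : Fin n → Ω → ℝ)
    (D : Finset (Fin n)) (χ : Finset (Fin n) → ℝ) (ω : Ω) : ℝ :=
  if h : (D.powerset.filter fun A => χ A = 1).Nonempty then
    (D.powerset.filter fun A => χ A = 1).sup' h
      (fun A => if hA : A.Nonempty then A.inf' hA fun i => T i ω else 0)
  else 0

/-- The `k`-th order statistic of the lifetimes `(T i)_{i ∈ M}`. -/
noncomputable def orderStat {Ω : Type*} {n : ℕ} (T : Fin n → Ω → ℝ)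
    (M : Finset (Fin n)) (k : ℕ) (ω : Ω) : ℝ :=
  ((M.val.map fun i => T i ω).sort (· ≤ ·)).getD (k - 1) 0

/-- The relative quality function `q_j(A) = Pr(max_{i ∈ C∖A} T_i = T_j < min_{i ∈ A} T_i)`. -/
noncomputable def relQual {Ω : Type*} [MeasurableSpace Ω] {n : ℕ} (μ : Measure Ω)
    (T : Fin n → Ω → ℝ) (j : Fin n) (A : Finset (Fin n)) : ℝ :=
  (μ {ω | (∀ i ∉ A, T i ω ≤ T j ω) ∧ ∀ i ∈ A, T j ω < T i ω}).toReal



lemma contInt (a b : ℕ) : IntervalIntegrable (fun t : ℝ => t ^ a * (1 - t) ^ b) volume 0 1 :=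
  (((continuous_pow a).mul ((continuous_const.sub continuous_id).pow b))).intervalIntegrable 0 1

lemma betaInt (b a : ℕ) : ∫ t in (0:ℝ)..1, t ^ a * (1 - t) ^ b
    = (a.factorial * b.factorial : ℝ) / (a + b + 1).factorial := by
  induction b generalizing a with
  | zero =>
    simp only [pow_zero, mul_one, integral_pow, Nat.factorial_zero, Nat.cast_one,
      Nat.add_zero]
    rw [Nat.factorial_succ]
    push_cast
    rw [one_pow]
    have : (a : ℝ) + 1 ≠ 0 := by positivity
    have h2 : (a.factorial : ℝ) ≠ 0 := by exact_mod_cast a.factorial_ne_zero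
    field_simp
    simp
  | succ b ih =>
    have key : ∀ t : ℝ, t ^ a * (1 - t) ^ (b + 1) = t ^ a * (1 - t) ^ b - t ^ (a+1) * (1-t) ^ b := by
      intro t; ring
    rw [show (fun t : ℝ => t ^ a * (1 - t) ^ (b+1)) = fun t : ℝ => t ^ a * (1 - t) ^ b - t ^ (a+1) * (1-t) ^ b from funext key]
    rw [intervalIntegral.integral_sub (contInt a b) (contInt (a+1) b), ih a, ih (a+1)]
    have e1 : a + 1 + b + 1 = (a + b + 1) + 1 := by omega
    have e2 : a + (b + 1) + 1 = (a + b + 1) + 1 := by omega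
    rw [e1, e2, Nat.factorial_succ (a+b+1), Nat.factorial_succ a, Nat.factorial_succ b]
    have h1 : ((a+b+1).factorial : ℝ) ≠ 0 := by exact_mod_cast Nat.factorial_ne_zero _
    have h2 : ((a:ℝ) + b + 1 + 1) ≠ 0 := by positivity
    push_cast
    field_simp
    ring

lemma getSortedStrict : ∀ (s : List ℝ), s.Pairwise (· < ·) → ∀ (i : ℕ) (hi : i < s.length) (x : ℝ),
    (s.get ⟨i, hi⟩ = x ↔ x ∈ s ∧ (s.filter (fun y => y < x)).length = i) := by
  intro s
  induction s with
  | nil => intro _ i hi; simp at hi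
  | cons a t iht =>
    intro hs i hi x
    have hat : ∀ y ∈ t, a < y := fun y hy => (List.pairwise_cons.1 hs).1 y hy
    have hts : t.Pairwise (· < ·) := (List.pairwise_cons.1 hs).2
    cases i with
    | zero =>
      simp only [List.get]
      constructor
      · rintro rfl
        refine ⟨List.mem_cons_self, ?_⟩
        have : ∀ y ∈ a :: t, ¬ y < a := by
          intro y hy
          rcases List.mem_cons.1 hy with rfl | hy
          · exact lt_irrefl _
          · exact not_lt.2 (hat y hy).le
        rw [List.filter_eq_nil_iff.2 (by intro y hy; simpa using this y hy)]
        simp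
      · rintro ⟨hmem, hcount⟩
        rcases List.mem_cons.1 hmem with rfl | hmem
        · rfl
        · exfalso
          have : a ∈ (a :: t).filter (fun y => decide (y < x)) := by
            simp [List.mem_filter, hat x hmem]
          rw [List.length_eq_zero_iff] at hcount
          simp [hcount] at this
    | succ i =>
      simp only [List.get, List.length_cons] at *
      rw [iht hts i (Nat.lt_of_succ_lt_succ hi) x]
      constructor
      · rintro ⟨hmem, hcount⟩
        have hax : a < x := hat x hmem
        refine ⟨List.mem_cons_of_mem _ hmem, ?_⟩
        rw [List.filter_cons, if_pos (by simpa using hax)]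
        simp [hcount]
      · rintro ⟨hmem, hcount⟩
        rcases List.mem_cons.1 hmem with rfl | hmem
        · exfalso
          have hpos : 0 < ((x :: t).filter (fun y => decide (y < x))).length := by omega
          obtain ⟨y, hyf⟩ := List.exists_mem_of_length_pos hpos
          have hy1 := List.of_mem_filter hyf
          have hy2 := List.mem_of_mem_filter hyf
          simp only [decide_eq_true_eq] at hy1
          rcases List.mem_cons.1 hy2 with rfl | hy2
          · exact lt_irrefl _ hy1
          · exact absurd hy1 (not_lt.2 (hat y hy2).le)
        · have hax : a < x := hat x hmem
          rw [List.filter_cons, if_pos (by simpa using hax)] at hcount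
          simp at hcount
          exact ⟨hmem, hcount⟩


section OrderStat
variable {Ω : Type*} {n : ℕ} (T : Fin n → Ω → ℝ) (M : Finset (Fin n)) (ω : Ω)

lemma sortList_length : ((M.val.map fun i => T i ω).sort (· ≤ ·)).length = M.card := by
  rw [Multiset.length_sort, Multiset.card_map]; rfl

lemma sortList_mem (x : ℝ) :
    x ∈ ((M.val.map fun i => T i ω).sort (· ≤ ·)) ↔ ∃ i ∈ M, T i ω = x := by
  rw [Multiset.mem_sort, Multiset.mem_map]
  simp only [← Finset.mem_def]

lemma sortList_filter (x : ℝ) :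
    (((M.val.map fun i => T i ω).sort (· ≤ ·)).filter (fun y => y < x)).length
      = (M.filter fun i => T i ω < x).card := by
  rw [← List.countP_eq_length_filter]
  have h1 : (((M.val.map fun i => T i ω).sort (· ≤ ·)) : Multiset ℝ).countP (fun y => y < x)
      = ((M.val.map fun i => T i ω)).countP (fun y => y < x) := by
    rw [Multiset.sort_eq]
  rw [Multiset.coe_countP] at h1
  rw [show (List.countP (fun y => decide (y < x)) ((M.val.map fun i => T i ω).sort (· ≤ ·)))
      = Multiset.countP (fun y => y < x) ((M.val.map fun i => T i ω)) from h1]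
  rw [Multiset.countP_map]
  rfl

lemma sortList_sorted_lt (hties : ∀ i ∈ M, ∀ j ∈ M, i ≠ j → T i ω ≠ T j ω) :
    ((M.val.map fun i => T i ω).sort (· ≤ ·)).Pairwise (· < ·) := by
  have hnd : ((M.val.map fun i => T i ω)).Nodup := by
    refine Multiset.Nodup.map_on ?_ M.nodup
    intro i hi j hj hfeq
    by_contra hne
    exact hties i hi j hj hne hfeq
  have hnd' : ((M.val.map fun i => T i ω).sort (· ≤ ·)).Nodup := by
    rw [← Multiset.coe_nodup, Multiset.sort_eq]; exact hnd
  have hs : ((M.val.map fun i => T i ω).sort (· ≤ ·)).Pairwise (· ≤ ·) :=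
    Multiset.pairwise_sort ..
  exact List.Pairwise.imp (fun h => lt_of_le_of_ne h.1 h.2) (List.Pairwise.and hs hnd')

variable {k : ℕ}

lemma orderStat_exists (hk1 : 1 ≤ k) (hkm : k ≤ M.card) :
    ∃ j ∈ M, orderStat T M k ω = T j ω := by
  have hlen : k - 1 < ((M.val.map fun i => T i ω).sort (· ≤ ·)).length := by
    rw [sortList_length]; omega
  rw [orderStat, List.getD_eq_get _ _ ⟨k-1, hlen⟩]
  have := List.get_mem _ ⟨k-1, hlen⟩
  rw [sortList_mem] at this
  obtain ⟨i, hi, hieq⟩ := this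
  exact ⟨i, hi, hieq.symm⟩

lemma orderStat_eq_iff (hties : ∀ i ∈ M, ∀ j ∈ M, i ≠ j → T i ω ≠ T j ω)
    (hk1 : 1 ≤ k) (hkm : k ≤ M.card) {j : Fin n} (hj : j ∈ M) :
    orderStat T M k ω = T j ω ↔ (M.filter fun i => T j ω < T i ω).card = M.card - k := by
  classical
  have hlen : k - 1 < ((M.val.map fun i => T i ω).sort (· ≤ ·)).length := by
    rw [sortList_length]; omega
  rw [orderStat, List.getD_eq_get _ _ ⟨k-1, hlen⟩,
    getSortedStrict _ (sortList_sorted_lt T M ω hties) _ hlen]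
  have hmem : T j ω ∈ ((M.val.map fun i => T i ω).sort (· ≤ ·)) := by
    rw [sortList_mem]; exact ⟨j, hj, rfl⟩
  rw [sortList_filter]
  -- cardinal bookkeeping
  have hsplit : (M.filter fun i => ¬ T j ω < T i ω).card
      = (M.filter fun i => T i ω < T j ω).card + 1 := by
    have : (M.filter fun i => ¬ T j ω < T i ω)
        = insert j (M.filter fun i => T i ω < T j ω) := by
      ext i
      simp only [Finset.mem_filter, Finset.mem_insert, not_lt]
      constructor
      · rintro ⟨hiM, hle⟩
        rcases eq_or_ne i j with rfl | hne
        · exact Or.inl rfl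
        · exact Or.inr ⟨hiM, lt_of_le_of_ne hle (hties i hiM j hj hne)⟩
      · rintro (rfl | ⟨hiM, hlt⟩)
        · exact ⟨hj, le_refl _⟩
        · exact ⟨hiM, hlt.le⟩
    rw [this, Finset.card_insert_of_notMem (by simp)]
  have htot := Finset.card_filter_add_card_filter_not
    (s := M) (p := fun i => T j ω < T i ω)
  rw [hsplit] at htot
  constructor
  · rintro ⟨-, hc⟩; omega
  · intro hc
    exact ⟨hmem, by omega⟩

end OrderStat


lemma sysLife_eq_iff {Ω : Type*} {n : ℕ} (T : Fin n → Ω → ℝ) (D : Finset (Fin n))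
    (φ : Finset (Fin n) → ℝ)
    (h01 : ∀ A, A ⊆ D → φ A = 0 ∨ φ A = 1)
    (hmono : ∀ A B : Finset (Fin n), A ⊆ B → B ⊆ D → φ A ≤ φ B)
    (hempty : φ ∅ = 0) (hfull : φ D = 1)
    (ω : Ω) (hties : ∀ i ∈ D, ∀ j ∈ D, i ≠ j → T i ω ≠ T j ω)
    {j : Fin n} (hj : j ∈ D) :
    sysLifeOn T D φ ω = T j ω ↔
      (φ (insert j (D.filter fun i => T j ω < T i ω)) = 1 ∧
       φ (D.filter fun i => T j ω < T i ω) = 0) := by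
  classical
  set F := (D.powerset.filter fun A => φ A = 1) with hF
  have hDF : D ∈ F := by simp [hF, hfull]
  have hne : F.Nonempty := ⟨D, hDF⟩
  have hsubD : ∀ A ∈ F, A ⊆ D := by
    intro A hA; exact Finset.mem_powerset.1 (Finset.mem_filter.1 hA).1
  have hone : ∀ A ∈ F, φ A = 1 := fun A hA => (Finset.mem_filter.1 hA).2
  have hAne : ∀ A ∈ F, A.Nonempty := by
    intro A hA
    rcases Finset.eq_empty_or_nonempty A with rfl | h
    · exact absurd (hone _ hA) (by rw [hempty]; norm_num)
    · exact h
  have hval : sysLifeOn T D φ ω = F.sup' hne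
      (fun A => if hA : A.Nonempty then A.inf' hA fun i => T i ω else 0) := by
    rw [sysLifeOn, dif_pos]
  set Aj := D.filter (fun i => T j ω < T i ω) with hAj
  have hjAj : j ∉ Aj := by simp [hAj]
  have hAjD : Aj ⊆ D := Finset.filter_subset _ _
  have hiAjD : insert j Aj ⊆ D := Finset.insert_subset hj hAjD
  constructor
  · intro hEq
    obtain ⟨A0, hA0F, hA0⟩ := Finset.exists_mem_eq_sup' hne
      (fun A => if hA : A.Nonempty then A.inf' hA fun i => T i ω else 0)
    have hA0ne : A0.Nonempty := hAne _ hA0F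
    rw [dif_pos hA0ne] at hA0
    obtain ⟨i0, hi0A0, hi0⟩ := Finset.exists_mem_eq_inf' hA0ne (fun i => T i ω)
    have hsys : sysLifeOn T D φ ω = T i0 ω := by rw [hval, hA0, hi0]
    have hij : i0 = j := by
      by_contra hne'
      exact hties i0 (hsubD _ hA0F hi0A0) j hj hne' (hsys ▸ hEq)
    subst hij
    -- now i0 = j ∈ A0
    have hjleA0 : ∀ i ∈ A0, T i0 ω ≤ T i ω := by
      intro i hi
      rw [← hi0]
      exact Finset.inf'_le _ hi
    have hA0sub : A0 ⊆ insert i0 Aj := by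
      intro i hi
      rcases eq_or_ne i i0 with rfl | hne'
      · exact Finset.mem_insert_self _ _
      · refine Finset.mem_insert_of_mem ?_
        rw [hAj, Finset.mem_filter]
        refine ⟨hsubD _ hA0F hi, ?_⟩
        exact lt_of_le_of_ne (hjleA0 i hi) (hties i0 hj i (hsubD _ hA0F hi) hne'.symm)
    constructor
    · have h1 : (1:ℝ) ≤ φ (insert i0 Aj) := by
        rw [← hone _ hA0F]
        exact hmono _ _ hA0sub hiAjD
      rcases h01 _ hiAjD with h | h
      · rw [h] at h1; norm_num at h1
      · exact h
    · by_contra h0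
      have h1 : φ Aj = 1 := (h01 _ hAjD).resolve_left h0
      have hAjF : Aj ∈ F := by
        rw [hF, Finset.mem_filter, Finset.mem_powerset]; exact ⟨hAjD, h1⟩
      have hAjne : Aj.Nonempty := hAne _ hAjF
      obtain ⟨i1, hi1Aj, hi1⟩ := Finset.exists_mem_eq_inf' hAjne (fun i => T i ω)
      have hgt : T i0 ω < T i1 ω := (Finset.mem_filter.1 hi1Aj).2
      have hle : Aj.inf' hAjne (fun i => T i ω) ≤ sysLifeOn T D φ ω := by
        rw [hval]
        have := Finset.le_sup' (f := fun A => if hA : A.Nonempty then A.inf' hA fun i => T i ω else 0) hAjF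
        rwa [dif_pos hAjne] at this
      rw [hi1, hsys] at hle
      exact absurd (lt_of_lt_of_le hgt hle) (lt_irrefl _)
  · rintro ⟨h1, h0⟩
    have hiF : insert j Aj ∈ F := by
      rw [hF, Finset.mem_filter, Finset.mem_powerset]; exact ⟨hiAjD, h1⟩
    have hiAjne : (insert j Aj).Nonempty := Finset.insert_nonempty _ _
    have hinf : (insert j Aj).inf' hiAjne (fun i => T i ω) = T j ω := by
      apply le_antisymm
      · exact Finset.inf'_le _ (Finset.mem_insert_self _ _)
      · apply Finset.le_inf'
        intro i hi
        rcases Finset.mem_insert.1 hi with rfl | hi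
        · exact le_refl _
        · exact ((Finset.mem_filter.1 hi).2).le
    apply le_antisymm
    · rw [hval]
      apply Finset.sup'_le
      intro A hAF
      have hAn : A.Nonempty := hAne _ hAF
      rw [dif_pos hAn]
      by_contra hgt
      push_neg at hgt
      have hAsub : A ⊆ Aj := by
        intro i hi
        rw [hAj, Finset.mem_filter]
        refine ⟨hsubD _ hAF hi, ?_⟩
        calc T j ω < A.inf' hAn (fun i => T i ω) := hgt
          _ ≤ T i ω := Finset.inf'_le _ hi
      have := hmono _ _ hAsub hAjD
      rw [hone _ hAF, h0] at this
      norm_num at this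
    · rw [hval]
      have := Finset.le_sup' (f := fun A => if hA : A.Nonempty then A.inf' hA fun i => T i ω else 0) hiF
      rwa [dif_pos hiAjne, hinf] at this

lemma measure_eq_sum_decomp {Ω : Type*} [MeasurableSpace Ω] (μ : Measure Ω)
    {ι : Type*} (I : Finset ι) (E : ι → Set Ω) (G : Set Ω) (S : Set Ω)
    (hEmeas : ∀ p ∈ I, MeasurableSet (E p))
    (hGmeas : MeasurableSet G) (hG : μ Gᶜ = 0)
    (hiff : ∀ ω ∈ G, (ω ∈ S ↔ ∃ p ∈ I, ω ∈ E p))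
    (hdisj : ∀ p ∈ I, ∀ q ∈ I, p ≠ q → ∀ ω ∈ G, ω ∈ E p → ω ∈ E q → False) :
    μ S = ∑ p ∈ I, μ (E p) := by
  have hGae : ∀ᵐ ω ∂μ, ω ∈ G := by
    rw [MeasureTheory.ae_iff]
    exact hG
  have h1 : S =ᵐ[μ] ⋃ p ∈ I, (E p ∩ G) := by
    rw [Filter.eventuallyEq_set]
    filter_upwards [hGae] with ω hω
    rw [hiff ω hω]
    simp only [Set.mem_iUnion, Set.mem_inter_iff]
    constructor
    · rintro ⟨p, hp, hEp⟩; exact ⟨p, hp, hEp, hω⟩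
    · rintro ⟨p, hp, hEp, -⟩; exact ⟨p, hp, hEp⟩
  rw [measure_congr h1, MeasureTheory.measure_biUnion_finset]
  · exact Finset.sum_congr rfl fun p hp => measure_inter_conull hG
  · intro p hp q hq hpq
    simp only [Function.onFun, Set.disjoint_left]
    intro ω hωp hωq
    exact hdisj p hp q hq hpq ω hωp.2 hωp.1 hωq.1
  · exact fun p hp => (hEmeas p hp).inter hGmeas


lemma sum_powerset_tb {γ : Type*} (s : Finset γ) (t : ℝ) :
    ∑ B ∈ s.powerset, t ^ B.card * (1 - t) ^ (s.card - B.card) = 1 := by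
  rw [Finset.sum_powerset_apply_card (fun b => t ^ b * (1 - t) ^ (s.card - b))]
  have h := add_pow t (1 - t) s.card
  simp only [add_sub_cancel, one_pow] at h
  calc ∑ m ∈ Finset.range (s.card+1), (s.card.choose m) • (t^m*(1-t)^(s.card-m))
      = ∑ m ∈ Finset.range (s.card+1), t^m*(1-t)^(s.card-m) * (s.card.choose m) := by
        apply Finset.sum_congr rfl; intro b _; rw [nsmul_eq_mul]; ring
    _ = 1 := by rw [← h]

lemma Jval {γ : Type*} (N a e : ℕ) (c : ℝ) (g : Finset γ → ℝ) (s : Finset γ) :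
    (∫ t in (0:ℝ)..1, (c * t ^ a * (1 - t) ^ e) *
        ∑ B ∈ s.powerset, t ^ B.card * (1 - t) ^ (N - B.card) * g B)
      = ∑ B ∈ s.powerset, c * g B *
          (((a + B.card).factorial * (e + (N - B.card)).factorial : ℝ)
            / ((a + B.card) + (e + (N - B.card)) + 1).factorial) := by
  have hint : ∀ B ∈ s.powerset, IntervalIntegrable
      (fun t : ℝ => (c * g B) * (t ^ (a + B.card) * (1 - t) ^ (e + (N - B.card)))) volume 0 1 :=
    fun B _ => (contInt (a + B.card) (e + (N - B.card))).const_mul _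
  have heq : ∀ t : ℝ, (c * t ^ a * (1 - t) ^ e) *
      ∑ B ∈ s.powerset, t ^ B.card * (1 - t) ^ (N - B.card) * g B
      = ∑ B ∈ s.powerset, (c * g B) * (t ^ (a + B.card) * (1 - t) ^ (e + (N - B.card))) := by
    intro t
    rw [Finset.mul_sum]
    apply Finset.sum_congr rfl
    intro B _
    rw [pow_add, pow_add]
    ring
  rw [intervalIntegral.integral_congr (fun t _ => heq t),
    intervalIntegral.integral_finset_sum hint]
  apply Finset.sum_congr rfl
  intro B _
  rw [intervalIntegral.integral_const_mul, betaInt]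

lemma u_eq_w (n a : ℕ) (hn : 1 ≤ n) (ha : a ≤ n - 1) :
    1 / ((n : ℝ) * ((n-1).choose a : ℕ)) = ((a.factorial * (n - 1 - a).factorial : ℕ) : ℝ) / n.factorial := by
  have h1 := Nat.choose_mul_factorial_mul_factorial ha
  have h2 : n * (n-1).factorial = n.factorial := Nat.mul_factorial_pred (by omega)
  have hch : (0:ℝ) < ((n-1).choose a : ℕ) := by exact_mod_cast Nat.choose_pos ha
  have hnf : (0:ℝ) < ((n.factorial : ℕ) : ℝ) := by exact_mod_cast n.factorial_pos
  have hn' : (0:ℝ) < (n:ℝ) := by exact_mod_cast hn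
  have key : (a.factorial * (n-1-a).factorial) * (n * ((n-1).choose a)) = n.factorial := by
    rw [← h2, ← h1]; ring
  rw [div_eq_div_iff (by positivity) (by positivity), one_mul]
  exact_mod_cast key.symm

/- A subset of the reduced component set `C_M = (C∖M) ∪ {[M]}` is encoded as a pair
consisting of a `Finset (Fin n)` (its part in `C∖M`) and a `Bool` recording whether the
macro-component `[M]` belongs to it; the organizing structure is `ψ : Finset (Fin n) → Bool → ℝ`,
and `Δ_[M]ψ(B) = ψ B true - ψ B false`. -/
theorem stmt_19 {Ω : Type*} [MeasurableSpace Ω] (μ : Measure Ω) [IsProbabilityMeasure μ]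
    {n : ℕ} (T : Fin n → Ω → ℝ) (hTmeas : ∀ i, Measurable (T i))
    (hTnonneg : ∀ i ω, 0 ≤ T i ω)
    (hties : ∀ i j : Fin n, i ≠ j → μ {ω | T i ω = T j ω} = 0)
    (φ : Finset (Fin n) → ℝ)
    (hφ01 : ∀ A, φ A = 0 ∨ φ A = 1)
    (hφmono : ∀ A B : Finset (Fin n), A ⊆ B → φ A ≤ φ B)
    (hφempty : φ ∅ = 0) (hφfull : φ Finset.univ = 1)
    (M : Finset (Fin n)) (hM : M.Nonempty)
    (χ : Finset (Fin n) → ℝ) (ψ : Finset (Fin n) → Bool → ℝ)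
    (hχ01 : ∀ A, A ⊆ M → χ A = 0 ∨ χ A = 1)
    (hχmono : ∀ A B : Finset (Fin n), A ⊆ B → B ⊆ M → χ A ≤ χ B)
    (hχempty : χ ∅ = 0) (hχfull : χ M = 1)
    (hψ01 : ∀ B b, B ⊆ Finset.univ \ M → ψ B b = 0 ∨ ψ B b = 1)
    (hψmono : ∀ (B B' : Finset (Fin n)) (b b' : Bool), B ⊆ B' → B' ⊆ Finset.univ \ M →
      (b = true → b' = true) → ψ B b ≤ ψ B' b')
    (hψempty : ψ ∅ false = 0) (hψfull : ψ (Finset.univ \ M) true = 1)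
    (hmod : ∀ A : Finset (Fin n),
      φ A = ψ (A \ M) (if χ (A ∩ M) = 1 then true else false))
    (hq : ∀ j ∈ M, ∀ A : Finset (Fin n), j ∉ A →
      relQual μ T j A = 1 / ((n : ℝ) * ((n - 1).choose A.card : ℕ)))
    (k : ℕ) (hk1 : 1 ≤ k) (hkm : k ≤ M.card) :
    (μ {ω | sysLifeOn T Finset.univ φ ω = orderStat T M k ω}).toReal =
      (μ {ω | sysLifeOn T M χ ω = orderStat T M k ω}).toReal *
        ∫ t in (0:ℝ)..1,
          ((M.card : ℝ) * ((M.card - 1).choose (M.card - k) : ℕ) *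
              t ^ (M.card - k) * (1 - t) ^ (k - 1)) *
            ∑ B ∈ ((Finset.univ : Finset (Fin n)) \ M).powerset,
              t ^ B.card * (1 - t) ^ (n - M.card - B.card) * (ψ B true - ψ B false) := by
  classical
  obtain ⟨j0, hj0M⟩ := hM
  have hn : 0 < n := j0.pos
  have hmn : M.card ≤ n := by simpa using Finset.card_le_card (Finset.subset_univ M)
  have hm1 : 1 ≤ M.card := hk1.trans hkm
  -- the no-ties event
  set G : Set Ω := {ω | ∀ i j : Fin n, i ≠ j → T i ω ≠ T j ω} with hGdef
  have hGcompl : Gᶜ = ⋃ (i : Fin n), ⋃ (j : Fin n), {ω | i ≠ j ∧ T i ω = T j ω} := by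
    ext ω
    simp only [hGdef, Set.mem_compl_iff, Set.mem_setOf_eq, Set.mem_iUnion]
    push_neg
    constructor
    · rintro ⟨i, j, hij, heq⟩; exact ⟨i, j, hij, heq⟩
    · rintro ⟨i, j, hij, heq⟩; exact ⟨i, j, hij, heq⟩
  have hITmeas : ∀ i j : Fin n, MeasurableSet {ω | i ≠ j ∧ T i ω = T j ω} := by
    intro i j
    rcases eq_or_ne i j with rfl | hij
    · have : {ω | i ≠ i ∧ T i ω = T i ω} = ∅ := by ext; simp
      rw [this]; exact MeasurableSet.empty
    · have : {ω | i ≠ j ∧ T i ω = T j ω} = {ω | T i ω = T j ω} := by ext; simp [hij]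
      rw [this]; exact measurableSet_eq_fun (hTmeas i) (hTmeas j)
  have hGmeas : MeasurableSet G := by
    rw [← compl_compl G, hGcompl]
    exact (MeasurableSet.iUnion fun i => MeasurableSet.iUnion fun j => hITmeas i j).compl
  have hGnull : μ Gᶜ = 0 := by
    rw [hGcompl]
    refine measure_iUnion_null fun i => measure_iUnion_null fun j => ?_
    rcases eq_or_ne i j with rfl | hij
    · have : {ω | i ≠ i ∧ T i ω = T i ω} = (∅ : Set Ω) := by ext; simp
      rw [this]; exact measure_empty
    · refine measure_mono_null ?_ (hties i j hij)
      intro ω hω; exact hω.2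
  -- the events
  set E : Fin n × Finset (Fin n) → Set Ω :=
    fun p => {ω | (∀ i ∉ p.2, T i ω ≤ T p.1 ω) ∧ ∀ i ∈ p.2, T p.1 ω < T i ω} with hEdef
  have hEmeas : ∀ p, MeasurableSet (E p) := by
    intro p
    have hrw : E p = ⋂ i : Fin n,
        (if i ∈ p.2 then {ω | T p.1 ω < T i ω} else {ω | T i ω ≤ T p.1 ω}) := by
      ext ω
      simp only [hEdef, Set.mem_setOf_eq, Set.mem_iInter]
      constructor
      · rintro ⟨h1, h2⟩ i
        by_cases hi : i ∈ p.2
        · rw [if_pos hi]; exact h2 i hi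
        · rw [if_neg hi]; exact h1 i hi
      · intro h
        constructor
        · intro i hi; have := h i; rwa [if_neg hi] at this
        · intro i hi; have := h i; rwa [if_pos hi] at this
    rw [hrw]
    refine MeasurableSet.iInter fun i => ?_
    split_ifs
    · exact measurableSet_lt (hTmeas p.1) (hTmeas i)
    · exact measurableSet_le (hTmeas i) (hTmeas p.1)
  -- index set
  set I : Finset (Fin n × Finset (Fin n)) :=
    (Finset.univ ×ˢ Finset.univ.powerset).filter
      (fun p => p.1 ∈ M ∧ p.1 ∉ p.2 ∧ (p.2 ∩ M).card = M.card - k) with hIdef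
  have hImem : ∀ p : Fin n × Finset (Fin n),
      p ∈ I ↔ (p.1 ∈ M ∧ p.1 ∉ p.2 ∧ (p.2 ∩ M).card = M.card - k) := by
    intro p
    simp [hIdef, Finset.mem_filter, Finset.mem_product]
  -- fixing the set from the event
  have hAfix : ∀ (p : Fin n × Finset (Fin n)) (ω : Ω), ω ∈ E p →
      p.2 = Finset.univ.filter (fun i => T p.1 ω < T i ω) := by
    intro p ω hω
    obtain ⟨h1, h2⟩ := hω
    ext i
    simp only [Finset.mem_filter, Finset.mem_univ, true_and]
    constructor
    · exact h2 i
    · intro hlt; by_contra hi; exact absurd (h1 i hi) (not_le.2 hlt)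
  have hEself : ∀ (j : Fin n) (ω : Ω),
      ω ∈ E (j, Finset.univ.filter (fun i => T j ω < T i ω)) := by
    intro j ω
    constructor
    · intro i hi
      simp only [Finset.mem_filter, Finset.mem_univ, true_and] at hi
      exact not_lt.1 hi
    · intro i hi
      simp only [Finset.mem_filter, Finset.mem_univ, true_and] at hi
      exact hi
  have hfilterM : ∀ (j : Fin n) (ω : Ω),
      Finset.univ.filter (fun i => T j ω < T i ω) ∩ M = M.filter (fun i => T j ω < T i ω) := by
    intro j ω
    ext i
    simp only [Finset.mem_inter, Finset.mem_filter, Finset.mem_univ, true_and]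
    tauto
  -- disjointness
  have hdisjkey : ∀ p ∈ I, ∀ q ∈ I, ∀ ω : Ω, ω ∈ E p → ω ∈ E q →
      T p.1 ω < T q.1 ω → False := by
    intro p hp q hq ω hωp hωq hlt
    obtain ⟨hpM, hpA, hpcard⟩ := (hImem p).1 hp
    obtain ⟨hqM, hqA, hqcard⟩ := (hImem q).1 hq
    have hA := hAfix p ω hωp
    have hA' := hAfix q ω hωq
    have hsub0 : q.2 ∩ M ⊆ p.2 ∩ M := by
      intro i hi
      rw [Finset.mem_inter] at hi ⊢
      refine ⟨?_, hi.2⟩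
      have hi1 := hi.1
      rw [hA', Finset.mem_filter] at hi1
      rw [hA, Finset.mem_filter]
      exact ⟨Finset.mem_univ _, hlt.trans hi1.2⟩
    have heq : q.2 ∩ M = p.2 ∩ M :=
      Finset.eq_of_subset_of_card_le hsub0 (by omega)
    have hq1 : q.1 ∈ p.2 ∩ M := by
      rw [Finset.mem_inter, hA, Finset.mem_filter]
      exact ⟨⟨Finset.mem_univ _, hlt⟩, hqM⟩
    rw [← heq, Finset.mem_inter] at hq1
    exact hqA hq1.1
  have hdisj : ∀ p ∈ I, ∀ q ∈ I, p ≠ q → ∀ ω ∈ G, ω ∈ E p → ω ∈ E q → False := by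
    intro p hp q hq hpq ω hωG hωp hωq
    rcases eq_or_ne p.1 q.1 with h1 | h1
    · apply hpq
      have h2 : p.2 = q.2 := by
        rw [hAfix p ω hωp, hAfix q ω hωq, h1]
      exact Prod.ext h1 h2
    · rcases lt_or_gt_of_ne (hωG p.1 q.1 h1) with h | h
      · exact hdisjkey p hp q hq ω hωp hωq h
      · exact hdisjkey q hq p hp ω hωq hωp h
  -- the filtered index sets
  set Isys := I.filter (fun p => φ (insert p.1 p.2) = 1 ∧ φ p.2 = 0) with hIsysdef
  set Imod := I.filter (fun p => χ (insert p.1 (p.2 ∩ M)) = 1 ∧ χ (p.2 ∩ M) = 0) with hImoddef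
  -- membership characterizations
  have hiffsys : ∀ ω ∈ G,
      (ω ∈ {ω | sysLifeOn T Finset.univ φ ω = orderStat T M k ω} ↔ ∃ p ∈ Isys, ω ∈ E p) := by
    intro ω hωG
    have hot : ∀ i ∈ M, ∀ j ∈ M, i ≠ j → T i ω ≠ T j ω := fun i _ j _ hij => hωG i j hij
    have hotu : ∀ i ∈ (Finset.univ : Finset (Fin n)), ∀ j ∈ (Finset.univ : Finset (Fin n)),
        i ≠ j → T i ω ≠ T j ω := fun i _ j _ hij => hωG i j hij
    simp only [Set.mem_setOf_eq]
    constructor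
    · intro hEq
      obtain ⟨j, hjM, hord⟩ := orderStat_exists T M ω hk1 hkm
      refine ⟨(j, Finset.univ.filter (fun i => T j ω < T i ω)), ?_, hEself j ω⟩
      rw [hIsysdef, Finset.mem_filter]
      refine ⟨?_, ?_⟩
      · rw [hImem]
        refine ⟨hjM, by simp, ?_⟩
        rw [hfilterM j ω]
        exact (orderStat_eq_iff T M ω hot hk1 hkm hjM).1 hord
      · exact (sysLife_eq_iff T Finset.univ φ (fun A _ => hφ01 A)
          (fun A B hAB _ => hφmono A B hAB) hφempty hφfull ω hotu
          (Finset.mem_univ j)).1 (by rw [hEq, hord])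
    · rintro ⟨p, hpIsys, hωp⟩
      rw [hIsysdef, Finset.mem_filter] at hpIsys
      have hpI := hpIsys.1
      have hφ1 := hpIsys.2.1
      have hφ0 := hpIsys.2.2
      obtain ⟨hpM, hpA, hpcard⟩ := (hImem p).1 hpI
      have hA := hAfix p ω hωp
      have hsys : sysLifeOn T Finset.univ φ ω = T p.1 ω := by
        apply (sysLife_eq_iff T Finset.univ φ (fun A _ => hφ01 A)
          (fun A B hAB _ => hφmono A B hAB) hφempty hφfull ω hotu (Finset.mem_univ p.1)).2
        rw [← hA]
        exact ⟨hφ1, hφ0⟩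
      have hord : orderStat T M k ω = T p.1 ω := by
        apply (orderStat_eq_iff T M ω hot hk1 hkm hpM).2
        rw [← hfilterM p.1 ω, ← hA]
        exact hpcard
      rw [hsys, hord]
  have hiffmod : ∀ ω ∈ G,
      (ω ∈ {ω | sysLifeOn T M χ ω = orderStat T M k ω} ↔ ∃ p ∈ Imod, ω ∈ E p) := by
    intro ω hωG
    have hot : ∀ i ∈ M, ∀ j ∈ M, i ≠ j → T i ω ≠ T j ω := fun i _ j _ hij => hωG i j hij
    simp only [Set.mem_setOf_eq]
    have hfM : ∀ j : Fin n, (M.filter (fun i => T j ω < T i ω))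
        = Finset.univ.filter (fun i => T j ω < T i ω) ∩ M := fun j => (hfilterM j ω).symm
    constructor
    · intro hEq
      obtain ⟨j, hjM, hord⟩ := orderStat_exists T M ω hk1 hkm
      refine ⟨(j, Finset.univ.filter (fun i => T j ω < T i ω)), ?_, hEself j ω⟩
      rw [hImoddef, Finset.mem_filter]
      have hmem : (j, Finset.univ.filter (fun i => T j ω < T i ω)) ∈ I := by
        rw [hImem]
        refine ⟨hjM, by simp, ?_⟩
        rw [hfilterM j ω]
        exact (orderStat_eq_iff T M ω hot hk1 hkm hjM).1 hord
      refine ⟨hmem, ?_⟩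
      have := (sysLife_eq_iff T M χ hχ01 hχmono hχempty hχfull ω hot hjM).1
        (by rw [hEq, hord])
      simpa only [hfilterM j ω] using this
    · rintro ⟨p, hpImod, hωp⟩
      rw [hImoddef, Finset.mem_filter] at hpImod
      have hpI := hpImod.1
      have hχ1 := hpImod.2.1
      have hχ0 := hpImod.2.2
      obtain ⟨hpM, hpA, hpcard⟩ := (hImem p).1 hpI
      have hA := hAfix p ω hωp
      have hsys : sysLifeOn T M χ ω = T p.1 ω := by
        apply (sysLife_eq_iff T M χ hχ01 hχmono hχempty hχfull ω hot hpM).2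
        rw [← hfilterM p.1 ω, ← hA]
        exact ⟨hχ1, hχ0⟩
      have hord : orderStat T M k ω = T p.1 ω := by
        apply (orderStat_eq_iff T M ω hot hk1 hkm hpM).2
        rw [← hfilterM p.1 ω, ← hA]
        exact hpcard
      rw [hsys, hord]
  -- measures as sums
  have hμsys : μ {ω | sysLifeOn T Finset.univ φ ω = orderStat T M k ω}
      = ∑ p ∈ Isys, μ (E p) :=
    measure_eq_sum_decomp μ Isys E G _ (fun p _ => hEmeas p) hGmeas hGnull hiffsys
      (fun p hp q hq hpq => hdisj p (Finset.mem_of_mem_filter _ hp)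
        q (Finset.mem_of_mem_filter _ hq) hpq)
  have hμmod : μ {ω | sysLifeOn T M χ ω = orderStat T M k ω}
      = ∑ p ∈ Imod, μ (E p) :=
    measure_eq_sum_decomp μ Imod E G _ (fun p _ => hEmeas p) hGmeas hGnull hiffmod
      (fun p hp q hq hpq => hdisj p (Finset.mem_of_mem_filter _ hp)
        q (Finset.mem_of_mem_filter _ hq) hpq)
  -- real-valued weights
  set u : ℕ → ℝ := fun a => 1 / ((n : ℝ) * ((n - 1).choose a : ℕ)) with hudef
  set c : ℝ := (M.card : ℝ) * ((M.card - 1).choose (M.card - k) : ℕ) with hcdef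
  have hPsys : (μ {ω | sysLifeOn T Finset.univ φ ω = orderStat T M k ω}).toReal
      = ∑ p ∈ Isys, u p.2.card := by
    rw [hμsys, ENNReal.toReal_sum (fun p _ => measure_ne_top μ _)]
    apply Finset.sum_congr rfl
    intro p hp
    have hpI := Finset.mem_of_mem_filter _ hp
    obtain ⟨hpM, hpA, -⟩ := (hImem p).1 hpI
    have hrq : (μ (E p)).toReal = relQual μ T p.1 p.2 := rfl
    rw [hrq, hq p.1 hpM p.2 hpA, hudef]
  have hPmod : (μ {ω | sysLifeOn T M χ ω = orderStat T M k ω}).toReal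
      = ∑ p ∈ Imod, u p.2.card := by
    rw [hμmod, ENNReal.toReal_sum (fun p _ => measure_ne_top μ _)]
    apply Finset.sum_congr rfl
    intro p hp
    have hpI := Finset.mem_of_mem_filter _ hp
    obtain ⟨hpM, hpA, -⟩ := (hImem p).1 hpI
    have hrq : (μ (E p)).toReal = relQual μ T p.1 p.2 := rfl
    rw [hrq, hq p.1 hpM p.2 hpA, hudef]
  have hUsys : (μ {ω | sysLifeOn T Finset.univ φ ω = orderStat T M k ω}).toReal
      = ∑ p ∈ I, (φ (insert p.1 p.2) - φ p.2) * u p.2.card := by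
    rw [hPsys, hIsysdef, Finset.sum_filter]
    apply Finset.sum_congr rfl
    intro p _
    by_cases h0 : φ p.2 = 0
    · by_cases h1 : φ (insert p.1 p.2) = 1
      · rw [if_pos ⟨h1, h0⟩, h1, h0]; ring
      · have h1' : φ (insert p.1 p.2) = 0 := (hφ01 _).resolve_right h1
        rw [if_neg (fun hc => h1 hc.1), h1', h0]; ring
    · have h0' : φ p.2 = 1 := (hφ01 _).resolve_left h0
      have h1' : φ (insert p.1 p.2) = 1 := by
        rcases hφ01 (insert p.1 p.2) with h | h
        · exfalso
          have := hφmono p.2 (insert p.1 p.2) (Finset.subset_insert _ _)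
          rw [h0', h] at this; linarith
        · exact h
      rw [if_neg (fun hc => h0 hc.2), h1', h0']; ring
  have hUmod : (μ {ω | sysLifeOn T M χ ω = orderStat T M k ω}).toReal
      = ∑ p ∈ I, (χ (insert p.1 (p.2 ∩ M)) - χ (p.2 ∩ M)) * u p.2.card := by
    rw [hPmod, hImoddef, Finset.sum_filter]
    apply Finset.sum_congr rfl
    intro p hp
    obtain ⟨hpM, -, -⟩ := (hImem p).1 hp
    have hsub1 : p.2 ∩ M ⊆ M := Finset.inter_subset_right
    have hsub2 : insert p.1 (p.2 ∩ M) ⊆ M := Finset.insert_subset hpM hsub1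
    by_cases h0 : χ (p.2 ∩ M) = 0
    · by_cases h1 : χ (insert p.1 (p.2 ∩ M)) = 1
      · rw [if_pos ⟨h1, h0⟩, h1, h0]; ring
      · have h1' := (hχ01 _ hsub2).resolve_right h1
        rw [if_neg (fun hc => h1 hc.1), h1', h0]; ring
    · have h0' := (hχ01 _ hsub1).resolve_left h0
      have h1' : χ (insert p.1 (p.2 ∩ M)) = 1 := by
        rcases hχ01 _ hsub2 with h | h
        · exfalso
          have := hχmono _ _ (Finset.subset_insert _ _) hsub2
          rw [h0', h] at this; linarith
        · exact h
      rw [if_neg (fun hc => h0 hc.2), h1', h0']; ring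
  -- factorization through the module
  have hfact : ∀ p ∈ I, φ (insert p.1 p.2) - φ p.2
      = (χ (insert p.1 (p.2 ∩ M)) - χ (p.2 ∩ M)) * (ψ (p.2 \ M) true - ψ (p.2 \ M) false) := by
    intro p hp
    obtain ⟨hpM, hpA, -⟩ := (hImem p).1 hp
    have hd : (insert p.1 p.2) \ M = p.2 \ M := by
      ext i
      simp only [Finset.mem_sdiff, Finset.mem_insert]
      constructor
      · rintro ⟨(rfl | hi), hiM⟩
        · exact absurd hpM hiM
        · exact ⟨hi, hiM⟩
      · rintro ⟨hi, hiM⟩; exact ⟨Or.inr hi, hiM⟩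
    have hi : (insert p.1 p.2) ∩ M = insert p.1 (p.2 ∩ M) := by
      ext i
      simp only [Finset.mem_inter, Finset.mem_insert]
      constructor
      · rintro ⟨(rfl | hi), hiM⟩
        · exact Or.inl rfl
        · exact Or.inr ⟨hi, hiM⟩
      · rintro (rfl | ⟨hi, hiM⟩)
        · exact ⟨Or.inl rfl, hpM⟩
        · exact ⟨Or.inr hi, hiM⟩
    have hsub1 : p.2 ∩ M ⊆ M := Finset.inter_subset_right
    have hsub2 : insert p.1 (p.2 ∩ M) ⊆ M := Finset.insert_subset hpM hsub1
    rw [hmod (insert p.1 p.2), hmod p.2, hd, hi]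
    rcases hχ01 _ hsub1 with h0 | h0
    · have hif0 : (if χ (p.2 ∩ M) = 1 then true else false) = false := by
        rw [h0]; norm_num
      rcases hχ01 _ hsub2 with h1 | h1
      · have hif1 : (if χ (insert p.1 (p.2 ∩ M)) = 1 then true else false) = false := by
          rw [h1]; norm_num
        rw [hif0, hif1, h0, h1]; ring
      · have hif1 : (if χ (insert p.1 (p.2 ∩ M)) = 1 then true else false) = true := by
          rw [h1]; norm_num
        rw [hif0, hif1, h0, h1]; ring
    · have h1 : χ (insert p.1 (p.2 ∩ M)) = 1 := by
        rcases hχ01 _ hsub2 with h | h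
        · exfalso
          have := hχmono _ _ (Finset.subset_insert _ _) hsub2
          rw [h0, h] at this; linarith
        · exact h
      have hif0 : (if χ (p.2 ∩ M) = 1 then true else false) = true := by
        rw [h0]; norm_num
      have hif1 : (if χ (insert p.1 (p.2 ∩ M)) = 1 then true else false) = true := by
        rw [h1]; norm_num
      rw [hif0, hif1, h0, h1]; ring
  have hcardp : ∀ p ∈ I, p.2.card = (M.card - k) + (p.2 \ M).card := by
    intro p hp
    obtain ⟨-, -, hc⟩ := (hImem p).1 hp
    have h := Finset.card_inter_add_card_sdiff p.2 M
    omega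
  -- splitting the sum
  set I1 : Finset (Fin n × Finset (Fin n)) :=
    (Finset.univ ×ˢ Finset.univ.powerset).filter
      (fun x => x.1 ∈ M ∧ x.2 ⊆ M.erase x.1 ∧ x.2.card = M.card - k) with hI1def
  have hI1mem : ∀ x : Fin n × Finset (Fin n),
      x ∈ I1 ↔ (x.1 ∈ M ∧ x.2 ⊆ M.erase x.1 ∧ x.2.card = M.card - k) := by
    intro x
    simp [hI1def, Finset.mem_filter, Finset.mem_product]
  have hsplit : ∀ (F : Finset (Fin n) → ℝ) (Gg : Fin n × Finset (Fin n) → ℝ),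
      ∑ p ∈ I, Gg (p.1, p.2 ∩ M) * F (p.2 \ M)
        = (∑ x ∈ I1, Gg x) * (∑ B ∈ ((Finset.univ : Finset (Fin n)) \ M).powerset, F B) := by
    intro F Gg
    rw [Finset.sum_mul_sum, ← Finset.sum_product']
    refine Finset.sum_nbij' (fun p => ((p.1, p.2 ∩ M), p.2 \ M))
      (fun q => (q.1.1, q.1.2 ∪ q.2)) ?_ ?_ ?_ ?_ ?_
    · intro p hp
      obtain ⟨hpM, hpA, hpcard⟩ := (hImem p).1 hp
      rw [Finset.mem_product]
      constructor
      · rw [hI1mem]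
        refine ⟨hpM, ?_, hpcard⟩
        intro i hi
        rw [Finset.mem_inter] at hi
        rw [Finset.mem_erase]
        exact ⟨fun h => hpA (h ▸ hi.1), hi.2⟩
      · rw [Finset.mem_powerset]
        intro i hi
        rw [Finset.mem_sdiff] at hi ⊢
        exact ⟨Finset.mem_univ _, hi.2⟩
    · intro q hq
      rw [Finset.mem_product] at hq
      obtain ⟨hq1, hq2⟩ := hq
      obtain ⟨hqM, hqsub, hqcard⟩ := (hI1mem q.1).1 hq1
      rw [Finset.mem_powerset] at hq2
      rw [hImem]
      have hdisj2 : q.1.2 ∩ (M \ M) = ∅ := by simp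
      have hq2M : ∀ i ∈ q.2, i ∉ M := by
        intro i hi
        have := hq2 hi
        rw [Finset.mem_sdiff] at this
        exact this.2
      have hq12M : ∀ i ∈ q.1.2, i ∈ M := by
        intro i hi
        exact Finset.mem_of_mem_erase (hqsub hi)
      refine ⟨hqM, ?_, ?_⟩
      · rw [Finset.mem_union]
        rintro (h | h)
        · exact absurd ((Finset.mem_erase.1 (hqsub h)).1) (fun hh => hh rfl)
        · exact hq2M _ h hqM
      · have : (q.1.2 ∪ q.2) ∩ M = q.1.2 := by
          ext i
          rw [Finset.mem_inter, Finset.mem_union]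
          constructor
          · rintro ⟨(h | h), hiM⟩
            · exact h
            · exact absurd hiM (hq2M _ h)
          · intro h
            exact ⟨Or.inl h, hq12M _ h⟩
        rw [this]; exact hqcard
    · intro p hp
      obtain ⟨hpM, hpA, -⟩ := (hImem p).1 hp
      have : (p.2 ∩ M) ∪ (p.2 \ M) = p.2 := by
        ext i
        rw [Finset.mem_union, Finset.mem_inter, Finset.mem_sdiff]
        by_cases hiM : i ∈ M <;> tauto
      exact Prod.ext rfl this
    · intro q hq
      rw [Finset.mem_product] at hq
      obtain ⟨hq1, hq2⟩ := hq
      obtain ⟨hqM, hqsub, -⟩ := (hI1mem q.1).1 hq1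
      rw [Finset.mem_powerset] at hq2
      have hq2M : ∀ i ∈ q.2, i ∉ M := by
        intro i hi
        have := hq2 hi
        rw [Finset.mem_sdiff] at this
        exact this.2
      have hq12M : ∀ i ∈ q.1.2, i ∈ M := by
        intro i hi
        exact Finset.mem_of_mem_erase (hqsub hi)
      have h1 : (q.1.2 ∪ q.2) ∩ M = q.1.2 := by
        ext i
        rw [Finset.mem_inter, Finset.mem_union]
        constructor
        · rintro ⟨(h | h), hiM⟩
          · exact h
          · exact absurd hiM (hq2M _ h)
        · intro h
          exact ⟨Or.inl h, hq12M _ h⟩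
      have h2 : (q.1.2 ∪ q.2) \ M = q.2 := by
        ext i
        rw [Finset.mem_sdiff, Finset.mem_union]
        constructor
        · rintro ⟨(h | h), hiM⟩
          · exact absurd (hq12M _ h) hiM
          · exact h
        · intro h
          exact ⟨Or.inr h, hq2M _ h⟩
      have : ((q.1.1, q.1.2 ∪ q.2).1, (q.1.1, q.1.2 ∪ q.2).2 ∩ M) = q.1 := by
        rw [Prod.ext_iff]
        exact ⟨rfl, h1⟩
      rw [Prod.ext_iff]
      exact ⟨this, h2⟩
    · intro p _
      rfl
  set Sχ : ℝ := ∑ x ∈ I1, (χ (insert x.1 x.2) - χ x.2) with hSdef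
  have hsys3 : (μ {ω | sysLifeOn T Finset.univ φ ω = orderStat T M k ω}).toReal
      = Sχ * ∑ B ∈ ((Finset.univ : Finset (Fin n)) \ M).powerset,
          (ψ B true - ψ B false) * u (M.card - k + B.card) := by
    rw [hUsys, ← hsplit (fun B => (ψ B true - ψ B false) * u (M.card - k + B.card))
      (fun x => χ (insert x.1 x.2) - χ x.2)]
    apply Finset.sum_congr rfl
    intro p hp
    rw [hfact p hp, hcardp p hp]
    simp only
    ring
  have hmod3 : (μ {ω | sysLifeOn T M χ ω = orderStat T M k ω}).toReal
      = Sχ * ∑ B ∈ ((Finset.univ : Finset (Fin n)) \ M).powerset, u (M.card - k + B.card) := by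
    rw [hUmod, ← hsplit (fun B => u (M.card - k + B.card))
      (fun x => χ (insert x.1 x.2) - χ x.2)]
    apply Finset.sum_congr rfl
    intro p hp
    rw [hcardp p hp]
  have hNcard : ((Finset.univ : Finset (Fin n)) \ M).card = n - M.card := by
    rw [Finset.card_sdiff_of_subset (Finset.subset_univ M)]
    simp
  have hBle : ∀ B ∈ ((Finset.univ : Finset (Fin n)) \ M).powerset, B.card ≤ n - M.card := by
    intro B hB
    have := Finset.card_le_card (Finset.mem_powerset.1 hB)
    omega
  -- evaluating the integral
  have hJ := Jval (n - M.card) (M.card - k) (k - 1) c (fun B => ψ B true - ψ B false)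
    ((Finset.univ : Finset (Fin n)) \ M)
  have hueq : ∀ B ∈ ((Finset.univ : Finset (Fin n)) \ M).powerset,
      (((M.card - k + B.card).factorial * ((k - 1) + ((n - M.card) - B.card)).factorial : ℝ)
          / (((M.card - k + B.card) + ((k - 1) + ((n - M.card) - B.card)) + 1).factorial))
        = u (M.card - k + B.card) := by
    intro B hB
    have hb := hBle B hB
    have e1 : (k - 1) + ((n - M.card) - B.card) = n - 1 - (M.card - k + B.card) := by omega
    have e2 : (M.card - k + B.card) + ((k - 1) + ((n - M.card) - B.card)) + 1 = n := by omega
    have ha : M.card - k + B.card ≤ n - 1 := by omega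
    rw [e2, e1, hudef]
    simp only
    rw [u_eq_w n (M.card - k + B.card) hn ha]
    push_cast
    ring
  have hJ' : (∫ t in (0:ℝ)..1,
        (c * t ^ (M.card - k) * (1 - t) ^ (k - 1)) *
          ∑ B ∈ ((Finset.univ : Finset (Fin n)) \ M).powerset,
            t ^ B.card * (1 - t) ^ (n - M.card - B.card) * (ψ B true - ψ B false))
      = c * ∑ B ∈ ((Finset.univ : Finset (Fin n)) \ M).powerset,
          (ψ B true - ψ B false) * u (M.card - k + B.card) := by
    rw [hJ, Finset.mul_sum]
    apply Finset.sum_congr rfl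
    intro B hB
    rw [← hueq B hB]
    ring
  -- the normalizing identity
  have hscal : c * (((M.card - k).factorial : ℝ) * ((k - 1).factorial : ℝ)
      / (((M.card - k) + (k - 1) + 1).factorial : ℝ)) = 1 := by
    have e3 : (M.card - k) + (k - 1) + 1 = M.card := by omega
    rw [e3]
    have h4 : (M.card - 1).choose (M.card - k) * (M.card - k).factorial
        * ((M.card - 1) - (M.card - k)).factorial = (M.card - 1).factorial :=
      Nat.choose_mul_factorial_mul_factorial (by omega)
    have e4 : (M.card - 1) - (M.card - k) = k - 1 := by omega
    rw [e4] at h4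
    have h5 : M.card * (M.card - 1).factorial = M.card.factorial :=
      Nat.mul_factorial_pred (by omega)
    have hkey : M.card * ((M.card - 1).choose (M.card - k))
        * ((M.card - k).factorial * (k - 1).factorial) = M.card.factorial := by
      rw [← h5, ← h4]; ring
    have hfne : (0:ℝ) < (M.card.factorial : ℝ) := by exact_mod_cast M.card.factorial_pos
    rw [hcdef, div_eq_inv_mul]
    rw [show ((M.card : ℝ) * ((M.card - 1).choose (M.card - k) : ℕ))
        * (((M.card.factorial : ℕ) : ℝ)⁻¹ * (((M.card - k).factorial : ℝ) * ((k - 1).factorial : ℝ)))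
        = (((M.card : ℝ) * ((M.card - 1).choose (M.card - k) : ℕ))
            * (((M.card - k).factorial : ℝ) * ((k - 1).factorial : ℝ))) / (M.card.factorial : ℕ) from by ring]
    rw [div_eq_one_iff_eq (by positivity)]
    exact_mod_cast hkey
  have hcV : c * (∑ B ∈ ((Finset.univ : Finset (Fin n)) \ M).powerset,
      u (M.card - k + B.card)) = 1 := by
    have h1 := Jval (n - M.card) (M.card - k) (k - 1) c (fun _ => (1:ℝ))
      ((Finset.univ : Finset (Fin n)) \ M)
    have h2 : (∫ t in (0:ℝ)..1,
          (c * t ^ (M.card - k) * (1 - t) ^ (k - 1)) *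
            ∑ B ∈ ((Finset.univ : Finset (Fin n)) \ M).powerset,
              t ^ B.card * (1 - t) ^ ((n - M.card) - B.card) * (1:ℝ))
        = ∫ t in (0:ℝ)..1, c * (t ^ (M.card - k) * (1 - t) ^ (k - 1)) := by
      apply intervalIntegral.integral_congr
      intro t _
      have hs := sum_powerset_tb ((Finset.univ : Finset (Fin n)) \ M) t
      rw [hNcard] at hs
      simp only [mul_one]
      rw [hs]
      ring
    rw [h2, intervalIntegral.integral_const_mul, betaInt] at h1
    calc c * (∑ B ∈ ((Finset.univ : Finset (Fin n)) \ M).powerset, u (M.card - k + B.card))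
        = ∑ B ∈ ((Finset.univ : Finset (Fin n)) \ M).powerset, c * (1:ℝ) *
            ((((M.card - k) + B.card).factorial * ((k - 1) + ((n - M.card) - B.card)).factorial : ℝ)
              / ((((M.card - k) + B.card) + ((k - 1) + ((n - M.card) - B.card)) + 1).factorial)) := by
          rw [Finset.mul_sum]
          apply Finset.sum_congr rfl
          intro B hB
          rw [← hueq B hB]
          push_cast
          ring
      _ = c * (((M.card - k).factorial : ℝ) * ((k - 1).factorial : ℝ)
            / (((M.card - k) + (k - 1) + 1).factorial : ℝ)) := by
          rw [← h1]
      _ = 1 := hscal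
  -- putting everything together
  rw [hsys3, hmod3, hJ']
  rw [show Sχ * (∑ B ∈ ((Finset.univ : Finset (Fin n)) \ M).powerset, u (M.card - k + B.card)) *
      (c * ∑ B ∈ ((Finset.univ : Finset (Fin n)) \ M).powerset,
        (ψ B true - ψ B false) * u (M.card - k + B.card))
      = (c * (∑ B ∈ ((Finset.univ : Finset (Fin n)) \ M).powerset, u (M.card - k + B.card))) *
        (Sχ * ∑ B ∈ ((Finset.univ : Finset (Fin n)) \ M).powerset,
          (ψ B true - ψ B false) * u (M.card - k + B.card)) from by ring]
  rw [hcV, one_mul]
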